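/- There are no rational numbers u, y satisfying y² = 102·(10001 − 4046u + 71009u²)·(−239735 + 28322u + 2388313u²). -/

import Mathlib

lemma sq_int_rat (t : ℚ) (N : ℤ) (h : t ^ 2 = (N : ℚ)) : ∃ z : ℤ, (z : ℚ) = t := by
  have hd : t.den ^ 2 = 1 := by
    have := congrArg Rat.den h
    simpa [Rat.den_pow] using this
  have : t.den = 1 := by nlinarith [t.pos]
  exact ⟨t.num, by rw [← Rat.num_div_den t, this]; simp⟩

lemma no17a (m z : ℤ) (hm : ¬ (17:ℤ) ∣ m) (h : z ^ 2 = 17 * m) : False := by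
  have hp : Prime (17:ℤ) := by norm_num
  have h17z : (17:ℤ) ∣ z := hp.dvd_of_dvd_pow (n := 2) ⟨m, h⟩
  obtain ⟨w, rfl⟩ := h17z
  exact hm ⟨w^2, by nlinarith⟩

lemma no17b (m z : ℤ) (hm : ¬ (17:ℤ) ∣ m) (h : z ^ 2 = 4913 * m) : False := by
  have hp : Prime (17:ℤ) := by norm_num
  have h17z : (17:ℤ) ∣ z := hp.dvd_of_dvd_pow (n := 2) ⟨289 * m, by linear_combination h⟩
  obtain ⟨w, rfl⟩ := h17z
  exact no17a m w hm (by nlinarith)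

lemma case1 : ∀ a b : ZMod 17, b ≠ 0 →
    6*(10001*b^2 - 4046*a*b + 71009*a^2)*(-239735*b^2+28322*a*b+2388313*a^2) ≠ 0 := by
  decide

lemma case2 : ∀ a c : ZMod 17, a ≠ 0 →
    6*(170017*c^2 - 4046*a*c + 4177*a^2)*(-4075495*c^2 + 28322*a*c + 140489*a^2) ≠ 0 := by
  decide

lemma intlem (a b z : ℤ) (hcop : Nat.Coprime a.natAbs b.natAbs)
    (hzz : z ^ 2 = 102 * (10001*b^2 - 4046*a*b + 71009*a^2) *
      (-239735*b^2 + 28322*a*b + 2388313*a^2)) : False := by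
  by_cases h17b : (17:ℤ) ∣ b
  · have h17a : ¬ (17:ℤ) ∣ a := by
      intro hda
      have h1 : (17:ℕ) ∣ a.natAbs := by
        have := Int.natAbs_dvd_natAbs.mpr hda; simpa using this
      have h2 : (17:ℕ) ∣ b.natAbs := by
        have := Int.natAbs_dvd_natAbs.mpr h17b; simpa using this
      have := Nat.dvd_gcd h1 h2
      rw [hcop] at this
      norm_num at this
    obtain ⟨c, rfl⟩ := h17b
    have hm : ¬ (17:ℤ) ∣ 6*(170017*c^2 - 4046*a*c + 4177*a^2)*(-4075495*c^2 + 28322*a*c + 140489*a^2) := by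
      intro hd
      have h0 : ((6*(170017*c^2 - 4046*a*c + 4177*a^2)*(-4075495*c^2 + 28322*a*c + 140489*a^2) : ℤ) : ZMod 17) = 0 :=
        (ZMod.intCast_zmod_eq_zero_iff_dvd _ 17).mpr hd
      have haZ : ((a : ZMod 17)) ≠ 0 := fun h0' =>
        h17a ((ZMod.intCast_zmod_eq_zero_iff_dvd _ 17).mp h0')
      apply case2 (a : ZMod 17) (c : ZMod 17) haZ
      push_cast at h0
      linear_combination h0
    exact no17b _ z hm (by linear_combination hzz)
  · have hm : ¬ (17:ℤ) ∣ 6 * (10001*b^2 - 4046*a*b + 71009*a^2) *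
        (-239735*b^2 + 28322*a*b + 2388313*a^2) := by
      intro hd
      have h0 : ((6 * (10001*b^2 - 4046*a*b + 71009*a^2) *
        (-239735*b^2 + 28322*a*b + 2388313*a^2) : ℤ) : ZMod 17) = 0 :=
        (ZMod.intCast_zmod_eq_zero_iff_dvd _ 17).mpr hd
      have hbZ : ((b : ZMod 17)) ≠ 0 := fun hb0 =>
        h17b ((ZMod.intCast_zmod_eq_zero_iff_dvd _ 17).mp hb0)
      apply case1 (a : ZMod 17) (b : ZMod 17) hbZ
      push_cast at h0
      linear_combination h0
    exact no17a _ z hm (by linear_combination hzz)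

theorem stmt_8 :
    ¬ ∃ u y : ℚ, y ^ 2 = 102 * (10001 - 4046 * u + 71009 * u ^ 2) *
      (-239735 + 28322 * u + 2388313 * u ^ 2) := by
  rintro ⟨u, y, h⟩
  have hbQ' : ((u.den : ℤ) : ℚ) ≠ 0 := by
    push_cast
    exact_mod_cast Nat.cast_ne_zero.mpr u.den_nz
  have hu : (u : ℚ) = (u.num : ℚ) / ((u.den : ℤ) : ℚ) := by
    push_cast; exact (Rat.num_div_den u).symm
  have key : (y * ((u.den:ℤ):ℚ)^2) ^ 2 =
      ((102 * (10001*(u.den:ℤ)^2 - 4046*u.num*(u.den:ℤ) + 71009*u.num^2) *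
        (-239735*(u.den:ℤ)^2 + 28322*u.num*(u.den:ℤ) + 2388313*u.num^2) : ℤ) : ℚ) := by
    rw [hu] at h
    field_simp at h
    have h' : ((u.den:ℤ):ℚ)^2 * ((y * ((u.den:ℤ):ℚ)^2) ^ 2) =
        ((u.den:ℤ):ℚ)^2 * ((102 * (10001*(u.den:ℤ)^2 - 4046*u.num*(u.den:ℤ) + 71009*u.num^2) *
        (-239735*(u.den:ℤ)^2 + 28322*u.num*(u.den:ℤ) + 2388313*u.num^2) : ℤ) : ℚ) := by
      push_cast
      linear_combination (((u.den:ℤ):ℚ))^2 * h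
    exact mul_left_cancel₀ (pow_ne_zero 2 hbQ') h'
  obtain ⟨z, hz⟩ := sq_int_rat _ _ key
  have hzz : z ^ 2 = 102 * (10001*(u.den:ℤ)^2 - 4046*u.num*(u.den:ℤ) + 71009*u.num^2) *
      (-239735*(u.den:ℤ)^2 + 28322*u.num*(u.den:ℤ) + 2388313*u.num^2) := by
    have := key
    rw [← hz] at this
    exact_mod_cast this
  exact intlem u.num (u.den:ℤ) z (by simpa using u.reduced) hzz
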